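/- Let d ≥ 1 and n = m − d. For every t with τ_{d−1} ≤ t < τ_{n+1}, the B-spline curve satisfies z(t) ∈ ⋃_{i=d−1}^{n} conv{p_{i−d+1}, …, p_i}; that is, the entire curve is contained in the union of the convex hulls of all groups of d successive control points. -/

import Mathlib

/-- Cox–de Boor B-spline basis function `B_{i,d}(t)` of order `d` for the knot
vector `τ`.  In Lean, division by zero yields zero, which matches the standard
convention that any term of the recursion whose denominator vanishes is taken
to be zero. -/
noncomputable def bspline (τ : ℕ → ℝ) : ℕ → ℕ → ℝ → ℝ
  | 0, _, _ => 0
  | 1, i, t => if τ i ≤ t ∧ t < τ (i + 1) then 1 else 0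
  | d + 2, i, t =>
      (t - τ i) / (τ (i + d + 1) - τ i) * bspline τ (d + 1) i t
      + (τ (i + d + 2) - t) / (τ (i + d + 2) - τ (i + 1)) * bspline τ (d + 1) (i + 1) t

/-- Chain of inequalities for a locally nondecreasing knot vector. -/
lemma tau_le_chain (τ : ℕ → ℝ) (lo hi : ℕ)
    (h : ∀ k, lo ≤ k → k < hi → τ k ≤ τ (k + 1)) :
    ∀ b a, lo ≤ a → a ≤ b → b ≤ hi → τ a ≤ τ b := by
  intro b
  induction b with
  | zero => intro a _ hab _; interval_cases a; exact le_rfl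
  | succ b ihb =>
    intro a hloa hab hbh
    rcases Nat.lt_succ_iff_lt_or_eq.mp (Nat.lt_succ_of_le hab) with h' | h'
    · exact le_trans (ihb a hloa (by omega) (by omega)) (h b (by omega) (by omega))
    · rw [h']

/-- Strict chain of inequalities for a locally increasing knot vector. -/
lemma tau_lt_chain (τ : ℕ → ℝ) (lo hi : ℕ)
    (h : ∀ k, lo ≤ k → k < hi → τ k < τ (k + 1)) :
    ∀ b a, lo ≤ a → a < b → b ≤ hi → τ a < τ b := by
  intro b
  induction b with
  | zero => omega
  | succ b ihb =>
    intro a hloa hab hbh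
    rcases Nat.lt_succ_iff_lt_or_eq.mp hab with h' | h'
    · exact lt_trans (ihb a hloa h' (by omega)) (h b (by omega) (by omega))
    · subst h'; exact h a hloa (by omega)

/-- Support of B-splines, left side: `B_{j,d}(t) = 0` for `t < τ j`. -/
theorem bspline_eq_zero_of_lt (τ : ℕ → ℝ) :
    ∀ (d j : ℕ) (t : ℝ),
      (∀ a b, j ≤ a → a ≤ b → b ≤ j + d → τ a ≤ τ b) →
      t < τ j → bspline τ d j t = 0
  | 0, j, t, _, _ => by simp [bspline]
  | 1, j, t, _, h => by
      simp only [bspline, ite_eq_right_iff, one_ne_zero]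
      rintro ⟨h1, _⟩; linarith
  | (d + 2), j, t, hm, h => by
      have h1 := bspline_eq_zero_of_lt τ (d + 1) j t
        (fun a b ha hab hb => hm a b ha hab (by omega)) h
      have h2 := bspline_eq_zero_of_lt τ (d + 1) (j + 1) t
        (fun a b ha hab hb => hm a b (by omega) hab (by omega))
        (lt_of_lt_of_le h (hm j (j + 1) le_rfl (by omega) (by omega)))
      simp [bspline, h1, h2]

/-- Support of B-splines, right side: `B_{j,d}(t) = 0` for `τ (j + d) ≤ t`. -/
theorem bspline_eq_zero_of_ge (τ : ℕ → ℝ) :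
    ∀ (d j : ℕ) (t : ℝ),
      (∀ a b, j ≤ a → a ≤ b → b ≤ j + d → τ a ≤ τ b) →
      τ (j + d) ≤ t → bspline τ d j t = 0
  | 0, j, t, _, _ => by simp [bspline]
  | 1, j, t, _, h => by
      simp only [bspline, ite_eq_right_iff, one_ne_zero]
      rintro ⟨_, h2⟩; linarith
  | (d + 2), j, t, hm, h => by
      have h1 := bspline_eq_zero_of_ge τ (d + 1) j t
        (fun a b ha hab hb => hm a b ha hab (by omega))
        (le_trans (hm (j + (d + 1)) (j + (d + 2)) (by omega) (by omega) (by omega)) h)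
      have h2 := bspline_eq_zero_of_ge τ (d + 1) (j + 1) t
        (fun a b ha hab hb => hm a b (by omega) hab (by omega))
        (by have : j + 1 + (d + 1) = j + (d + 2) := by omega
            rw [this]; exact h)
      simp [bspline, h1, h2]

/-- Nonnegativity of the B-spline basis functions. -/
theorem bspline_nonneg (τ : ℕ → ℝ) :
    ∀ (d j : ℕ) (t : ℝ),
      (∀ a b, j ≤ a → a ≤ b → b ≤ j + d → τ a ≤ τ b) →
      0 ≤ bspline τ d j t
  | 0, j, t, _ => by simp [bspline]
  | 1, j, t, _ => by
      simp only [bspline]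
      split <;> norm_num
  | (d + 2), j, t, hm => by
      have hB1 := bspline_nonneg τ (d + 1) j t
        (fun a b ha hab hb => hm a b ha hab (by omega))
      have hB2 := bspline_nonneg τ (d + 1) (j + 1) t
        (fun a b ha hab hb => hm a b (by omega) hab (by omega))
      simp only [bspline]
      apply add_nonneg
      · by_cases hz : bspline τ (d + 1) j t = 0
        · simp [hz]
        · have hjt : τ j ≤ t := by
            by_contra hc
            exact hz (bspline_eq_zero_of_lt τ (d + 1) j t
              (fun a b ha hab hb => hm a b ha hab (by omega)) (by linarith))
          have hden : τ j ≤ τ (j + d + 1) := hm j (j + d + 1) le_rfl (by omega) (by omega)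
          exact mul_nonneg (div_nonneg (by linarith) (by linarith)) hB1
      · by_cases hz : bspline τ (d + 1) (j + 1) t = 0
        · simp [hz]
        · have hjt : t < τ (j + d + 2) := by
            by_contra hc
            push_neg at hc
            refine hz (bspline_eq_zero_of_ge τ (d + 1) (j + 1) t
              (fun a b ha hab hb => hm a b (by omega) hab (by omega)) ?_)
            have : j + 1 + (d + 1) = j + d + 2 := by omega
            rw [this]; exact hc
          have hden : τ (j + 1) ≤ τ (j + d + 2) :=
            hm (j + 1) (j + d + 2) (by omega) (by omega) (by omega)
          exact mul_nonneg (div_nonneg (by linarith) (by linarith)) hB2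

/-- Local partition of unity for B-splines. -/
theorem bspline_sum_one (τ : ℕ → ℝ) (t : ℝ) :
    ∀ (e i : ℕ), e ≤ i →
      (∀ k, i - e ≤ k → k < i + e + 1 → τ k < τ (k + 1)) →
      τ i ≤ t → t < τ (i + 1) →
      ∑ j ∈ Finset.Icc (i - e) i, bspline τ (e + 1) j t = 1 := by
  intro e
  induction e with
  | zero =>
    intro i _ _ h1 h2
    rw [Nat.sub_zero, Finset.Icc_self, Finset.sum_singleton]
    simp [bspline, h1, h2]
  | succ e ih =>
    intro i hei hst h1 h2
    set a := i - (e + 1) with ha_def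
    have ha1 : a + 1 = i - e := by omega
    have ha2 : a + e + 1 = i := by omega
    have hle : ∀ x y, a ≤ x → x ≤ y → y ≤ i + e + 2 → τ x ≤ τ y := by
      intro x y hx hxy hy
      exact tau_le_chain τ a (i + e + 2)
        (fun k hk hk' => le_of_lt (hst k (by omega) (by omega))) y x hx hxy hy
    -- the two families of summands
    set H : ℕ → ℝ := fun j => (t - τ j) / (τ (j + e + 1) - τ j) * bspline τ (e + 1) j t
      with hH
    set G : ℕ → ℝ := fun k => (τ (k + e + 1) - t) / (τ (k + e + 1) - τ k) *
      bspline τ (e + 1) k t with hG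
    have hsplit : ∀ j, bspline τ (e + 2) j t = H j + G (j + 1) := by
      intro j
      have h1' : j + 1 + e + 1 = j + e + 2 := by omega
      simp only [hH, hG, bspline, h1']
    have key : ∑ j ∈ Finset.Icc a i, bspline τ (e + 1 + 1) j t
        = ∑ j ∈ Finset.Icc a i, H j + ∑ j ∈ Finset.Icc a i, G (j + 1) := by
      rw [← Finset.sum_add_distrib]
      refine Finset.sum_congr rfl fun j _ => ?_
      exact hsplit j
    rw [key]
    -- reindex the G-sum
    have hmap : ∑ j ∈ Finset.Icc a i, G (j + 1)
        = ∑ k ∈ Finset.Icc (a + 1) (i + 1), G k := by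
      rw [← Finset.map_add_right_Icc a i 1, Finset.sum_map]
      rfl
    rw [hmap]
    -- drop the vanishing boundary terms
    have hHa : H a = 0 := by
      have hz : bspline τ (e + 1) a t = 0 := by
        apply bspline_eq_zero_of_ge τ (e + 1) a t
          (fun x y hx hxy hy => hle x y hx hxy (by omega))
        have : a + (e + 1) = i := by omega
        rw [this]; exact h1
      simp [hH, hz]
    have hGi : G (i + 1) = 0 := by
      have hz : bspline τ (e + 1) (i + 1) t = 0 := by
        apply bspline_eq_zero_of_lt τ (e + 1) (i + 1) t
          (fun x y hx hxy hy => hle x y (by omega) hxy (by omega)) h2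
      simp [hG, hz]
    have hHsum : ∑ j ∈ Finset.Icc a i, H j = ∑ j ∈ Finset.Icc (a + 1) i, H j := by
      refine (Finset.sum_subset (Finset.Icc_subset_Icc (by omega) le_rfl) ?_).symm
      intro j hj hj'
      have : j = a := by
        simp only [Finset.mem_Icc] at hj hj'; omega
      rw [this]; exact hHa
    have hGsum : ∑ k ∈ Finset.Icc (a + 1) (i + 1), G k
        = ∑ k ∈ Finset.Icc (a + 1) i, G k := by
      refine (Finset.sum_subset (Finset.Icc_subset_Icc le_rfl (by omega)) ?_).symm
      intro k hk hk'
      have : k = i + 1 := by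
        simp only [Finset.mem_Icc] at hk hk'; omega
      rw [this]; exact hGi
    rw [hHsum, hGsum, ← Finset.sum_add_distrib]
    have hmerge : ∀ j ∈ Finset.Icc (a + 1) i, H j + G j = bspline τ (e + 1) j t := by
      intro j hj
      simp only [Finset.mem_Icc] at hj
      have hD : τ j < τ (j + e + 1) :=
        tau_lt_chain τ a (i + e + 2) (fun k hk hk' => hst k (by omega) (by omega))
          (j + e + 1) j (by omega) (by omega) (by omega)
      have hD' : τ (j + e + 1) - τ j ≠ 0 := sub_ne_zero.mpr hD.ne'
      simp only [hH, hG]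
      field_simp
      ring
    rw [Finset.sum_congr rfl hmerge]
    have := ih i (by omega) (fun k hk hk' => hst k (by omega) (by omega)) h1 h2
    rw [ha1]
    exact this

/-- the whole B-spline curve lies in the union of the convex hulls
of all groups of `d` successive control points (with `n = m - d`). -/
theorem bspline_curve_union_convex_hulls (q m d : ℕ) (τ : ℕ → ℝ)
    (hτ : ∀ j, j < m → τ j < τ (j + 1))
    (hd : 1 ≤ d) (hdm : d ≤ m)
    (p : ℕ → EuclideanSpace ℝ (Fin q))
    (t : ℝ) (ht1 : τ (d - 1) ≤ t) (ht2 : t < τ (m - d + 1)) :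
    (∑ j ∈ Finset.range (m - d + 1), bspline τ d j t • p j) ∈
      ⋃ i ∈ Set.Icc (d - 1) (m - d),
        convexHull ℝ (p '' Set.Icc (i - (d - 1)) i) := by
  classical
  obtain ⟨e, rfl⟩ : ∃ e, d = e + 1 := ⟨d - 1, by omega⟩
  simp only [Nat.add_sub_cancel] at *
  set n := m - (e + 1) with hn_def
  have hne : n + (e + 1) = m := by omega
  have Hle : ∀ a b, a ≤ b → b ≤ m → τ a ≤ τ b := by
    intro a b hab hbm
    exact tau_le_chain τ 0 m (fun k _ hk => le_of_lt (hτ k hk)) b a (Nat.zero_le a) hab hbm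
  have Hlt : ∀ a b, a < b → b ≤ m → τ a < τ b := by
    intro a b hab hbm
    exact tau_lt_chain τ 0 m (fun k _ hk => hτ k hk) b a (Nat.zero_le a) hab hbm
  -- the interval [e, n] must be nonempty
  have hen : e ≤ n := by
    by_contra hc
    push_neg at hc
    have h1 : τ (n + 1) ≤ τ e := Hle (n + 1) e (by omega) (by omega)
    linarith [lt_of_lt_of_le ht2 h1]
  -- find the knot interval containing t
  set P : ℕ → Prop := fun j => τ j ≤ t with hP
  set i := Nat.findGreatest P n with hi_def
  have hdi : e ≤ i := Nat.le_findGreatest hen ht1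
  have hin : i ≤ n := Nat.findGreatest_le n
  have hti : τ i ≤ t := by
    have : P i := by rw [hi_def]; exact Nat.findGreatest_spec hen ht1
    exact this
  have hti' : t < τ (i + 1) := by
    rcases eq_or_lt_of_le hin with h | h
    · rw [h]; exact ht2
    · have := Nat.findGreatest_is_greatest (P := P) (n := n)
        (Nat.lt_succ_self i) (by omega)
      simpa [hP] using not_le.mp this
  -- restrict the sum to the active basis functions
  have hsub : Finset.Icc (i - e) i ⊆ Finset.range (n + 1) := by
    intro j hj
    simp only [Finset.mem_Icc] at hj
    simp only [Finset.mem_range]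
    omega
  have hz : ∀ j ∈ Finset.range (n + 1), j ∉ Finset.Icc (i - e) i →
      bspline τ (e + 1) j t • p j = 0 := by
    intro j hj hj'
    simp only [Finset.mem_range] at hj
    simp only [Finset.mem_Icc, not_and_or, not_le] at hj'
    have hjm : j + (e + 1) ≤ m := by omega
    have hmono : ∀ a b, j ≤ a → a ≤ b → b ≤ j + (e + 1) → τ a ≤ τ b :=
      fun a b ha hab hb => Hle a b hab (by omega)
    rcases hj' with h' | h'
    · -- j < i - e : the support lies to the left of t
      have hji : j + (e + 1) ≤ i := by omega
      have : τ (j + (e + 1)) ≤ t :=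
        le_trans (Hle (j + (e + 1)) i hji (by omega)) hti
      rw [bspline_eq_zero_of_ge τ (e + 1) j t hmono this, zero_smul]
    · -- i < j : the support lies to the right of t
      have : t < τ j := lt_of_lt_of_le hti' (Hle (i + 1) j (by omega) (by omega))
      rw [bspline_eq_zero_of_lt τ (e + 1) j t hmono this, zero_smul]
  rw [← Finset.sum_subset hsub hz]
  -- membership in the appropriate convex hull
  refine Set.mem_biUnion (show i ∈ Set.Icc e n from ⟨hdi, hin⟩) ?_
  refine (convex_convexHull ℝ _).sum_mem ?_ ?_ ?_
  · intro j hj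
    simp only [Finset.mem_Icc] at hj
    exact bspline_nonneg τ (e + 1) j t (fun a b ha hab hb => Hle a b hab (by omega))
  · exact bspline_sum_one τ t e i hdi
      (fun k hk hk' => hτ k (by omega)) hti hti'
  · intro j hj
    simp only [Finset.mem_Icc] at hj
    exact subset_convexHull ℝ _ (Set.mem_image_of_mem p (Set.mem_Icc.mpr hj))
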